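/- arXiv:2602.23966 — 4 statements merged into one kernel-verified Lean document; each statement's English description precedes it below -/
import Mathlib

section
/- Let K be a field, let n ≥ 1 and m ≥ 1 be integers, and let P₁,…,P_k (with k ≥ 1) be distinct points of the projective space ℙⁿ over K. If P₁,…,P_k satisfy the Cayley–Bacharach condition with respect to homogeneous forms of degree m, then k ≥ m + 2. -/
open MvPolynomial Finset in
/-- Linear form as a polynomial. -/
private noncomputable def linForm {K : Type*} [Field K] {N : ℕ} (a : Fin N → K) :
    MvPolynomial (Fin N) K := ∑ i, MvPolynomial.C (a i) * MvPolynomial.X i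

private theorem linForm_homog {K : Type*} [Field K] {N : ℕ} (a : Fin N → K) :
    (linForm a).IsHomogeneous 1 := by
  apply MvPolynomial.IsHomogeneous.sum
  intro i _
  simpa using (MvPolynomial.isHomogeneous_X K i).C_mul (a i)

private theorem linForm_eval {K : Type*} [Field K] {N : ℕ} (a w : Fin N → K) :
    MvPolynomial.eval w (linForm a) = ∑ i, a i * w i := by
  simp [linForm]

/-- **Cayley–Bacharach count bound in projective space.**
Points of ℙⁿ over a field `K` are represented by nonzero, pairwise non-proportional
vectors of `K^{n+1}`.  If `k ≥ 1` distinct points satisfy the Cayley–Bacharach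
condition with respect to homogeneous forms of degree `m ≥ 1`, then `k ≥ m + 2`. -/
theorem cayley_bacharach_count_bound
    (K : Type*) [Field K] (n m k : ℕ) (hn : 1 ≤ n) (hm : 1 ≤ m) (hk : 1 ≤ k)
    (v : Fin k → (Fin (n + 1) → K))
    (hv0 : ∀ i, v i ≠ 0)
    (hdist : ∀ i j, i ≠ j → ∀ c : K, v j ≠ c • v i)
    (hCB : ∀ F : MvPolynomial (Fin (n + 1)) K, F.IsHomogeneous m →
      ∀ i : Fin k, (∀ j, j ≠ i → MvPolynomial.eval (v j) F = 0) →
        MvPolynomial.eval (v i) F = 0) :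
    k ≥ m + 2 := by
  classical
  by_contra h
  push_neg at h
  have hkm : k - 1 ≤ m := by omega
  set i0 : Fin k := ⟨0, hk⟩ with hi0
  -- choose for each j a covector a j with ⟨a j, v i0⟩ ≠ 0, and ⟨a j, v j⟩ = 0 if j ≠ i0
  have hex : ∀ j : Fin k, ∃ a : Fin (n+1) → K,
      (j ≠ i0 → (∑ i, a i * v j i) = 0) ∧ (∑ i, a i * v i0 i) ≠ 0 := by
    intro j
    by_cases hj : j = i0
    · obtain ⟨i, hi⟩ := Function.ne_iff.mp (hv0 i0)
      refine ⟨Pi.single i 1, fun hc => absurd hj hc, ?_⟩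
      simp only [Pi.zero_apply] at hi
      have : ∑ i', Pi.single (M := fun _ => K) i 1 i' * v i0 i' = v i0 i := by
        rw [Finset.sum_eq_single i] <;> simp +contextual [Pi.single_apply]
      rw [this]; exact hi
    · have hnm : v i0 ∉ Submodule.span K {v j} := by
        rw [Submodule.mem_span_singleton]
        rintro ⟨c, hc⟩
        exact hdist j i0 hj c hc.symm
      obtain ⟨f, hf1, hf2⟩ := Submodule.exists_dual_map_eq_bot_of_notMem hnm inferInstance
      have hfj : f (v j) = 0 := by
        have : f (v j) ∈ Submodule.map f (Submodule.span K {v j}) :=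
          Submodule.mem_map_of_mem (Submodule.mem_span_singleton_self _)
        rw [hf2] at this
        exact (Submodule.mem_bot K).mp this
      have key : ∀ w : Fin (n+1) → K, f w = ∑ i, f (Pi.single i 1) * w i := by
        intro w
        conv_lhs => rw [pi_eq_sum_univ w]
        rw [map_sum]
        refine Finset.sum_congr rfl fun i _ => ?_
        rw [map_smul, smul_eq_mul, mul_comm]
        congr 2
        ext j'
        simp [Pi.single_apply, eq_comm]
      exact ⟨fun i => f (Pi.single i 1), fun _ => by rw [← key]; exact hfj,
        by rw [← key]; exact hf1⟩
  choose a ha0 ha1 using hex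
  set F : MvPolynomial (Fin (n+1)) K :=
    (∏ j ∈ Finset.univ.erase i0, linForm (a j)) * (linForm (a i0)) ^ (m - (k - 1)) with hF
  have hFhom : F.IsHomogeneous m := by
    have h1 : (∏ j ∈ Finset.univ.erase i0, linForm (a j)).IsHomogeneous (k - 1) := by
      have := MvPolynomial.IsHomogeneous.prod (Finset.univ.erase i0)
        (fun j => linForm (a j)) (fun _ => 1) (fun j _ => linForm_homog (a j))
      simpa [Finset.card_erase_of_mem, Finset.card_univ] using this
    have h2 : ((linForm (a i0)) ^ (m - (k - 1))).IsHomogeneous (m - (k - 1)) := by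
      simpa using (linForm_homog (a i0)).pow (m - (k-1))
    have := h1.mul h2
    rwa [Nat.add_sub_cancel' hkm] at this
  have hvanish : ∀ j, j ≠ i0 → MvPolynomial.eval (v j) F = 0 := by
    intro j hj
    rw [hF, map_mul, map_prod]
    have : MvPolynomial.eval (v j) (linForm (a j)) = 0 := by
      rw [linForm_eval]; exact ha0 j hj
    rw [Finset.prod_eq_zero (Finset.mem_erase.mpr ⟨hj, Finset.mem_univ j⟩) this, zero_mul]
  have := hCB F hFhom i0 hvanish
  rw [hF, map_mul, map_prod, map_pow] at this
  rcases mul_eq_zero.mp this with h' | h'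
  · obtain ⟨j, _, hj⟩ := Finset.prod_eq_zero_iff.mp h'
    rw [linForm_eval] at hj
    exact ha1 j hj
  · exact ha1 i0 (by rw [linForm_eval] at h'; exact pow_eq_zero_iff'.mp h' |>.1)
end

section
/- Let n ≥ 1 and m ≥ 1 be integers and let P₁,…,P_k (with k ≥ 1) be distinct points of the projective space ℙⁿ over ℂ satisfying the Cayley–Bacharach condition with respect to homogeneous forms of degree m. If k ≤ 2m + 1, then the points lie on a line in ℙⁿ: representative vectors v₁,…,v_k ∈ ℂ^{n+1} of the points span a linear subspace of ℂ^{n+1} of dimension at most 2. -/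
open MvPolynomial Module Submodule

noncomputable def polyOfDual {N : ℕ} (φ : Module.Dual ℂ (Fin N → ℂ)) :
    MvPolynomial (Fin N) ℂ :=
  ∑ i, MvPolynomial.C (φ (fun j => if i = j then 1 else 0)) * MvPolynomial.X i

lemma polyOfDual_eval {N : ℕ} (φ : Module.Dual ℂ (Fin N → ℂ)) (x : Fin N → ℂ) :
    MvPolynomial.eval x (polyOfDual φ) = φ x := by
  rw [LinearMap.pi_apply_eq_sum_univ φ x]
  simp [polyOfDual, mul_comm, smul_eq_mul]

lemma polyOfDual_hom {N : ℕ} (φ : Module.Dual ℂ (Fin N → ℂ)) :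
    (polyOfDual φ).IsHomogeneous 1 :=
  MvPolynomial.IsHomogeneous.sum _ _ _ fun _ _ => MvPolynomial.isHomogeneous_C_mul_X _ _

lemma cb_reduction {n m k : ℕ} (hm : 1 ≤ m) (v : Fin k → (Fin (n + 1) → ℂ))
    (hCB : ∀ F : MvPolynomial (Fin (n + 1)) ℂ, F.IsHomogeneous m →
      ∀ i : Fin k, (∀ j, j ≠ i → MvPolynomial.eval (v j) F = 0) →
        MvPolynomial.eval (v i) F = 0)
    (i : Fin k) (g : Fin k → ℕ)
    (hg : ∀ j, j ≠ i → g j < m)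
    (hspan : ∀ t, t < m →
      v i ∉ Submodule.span ℂ (v '' {j | j ≠ i ∧ g j = t})) : False := by
  have hφ : ∀ t : Fin m, ∃ φ : Module.Dual ℂ (Fin (n + 1) → ℂ),
      φ (v i) ≠ 0 ∧ ∀ j, j ≠ i → g j = (t : ℕ) → φ (v j) = 0 := by
    intro t
    obtain ⟨φ, h1, h2⟩ :=
      Submodule.exists_dual_map_eq_bot_of_notMem (hspan t t.isLt) inferInstance
    refine ⟨φ, h1, fun j hj hgj => ?_⟩
    have hmem : φ (v j) ∈ (Submodule.span ℂ (v '' {j | j ≠ i ∧ g j = (t : ℕ)})).map φ :=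
      Submodule.mem_map_of_mem (Submodule.subset_span ⟨j, ⟨hj, hgj⟩, rfl⟩)
    rwa [h2, Submodule.mem_bot] at hmem
  choose φ h1 h2 using hφ
  set F : MvPolynomial (Fin (n + 1)) ℂ := ∏ t : Fin m, polyOfDual (φ t) with hF
  have hFhom : F.IsHomogeneous m := by
    have := MvPolynomial.IsHomogeneous.prod Finset.univ (fun t => polyOfDual (φ t))
      (fun _ => 1) (fun t _ => polyOfDual_hom (φ t))
    simpa using this
  have heval : ∀ x, MvPolynomial.eval x F = ∏ t : Fin m, φ t x := by
    intro x
    rw [hF, map_prod]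
    exact Finset.prod_congr rfl fun t _ => polyOfDual_eval _ _
  have hvan : ∀ j, j ≠ i → MvPolynomial.eval (v j) F = 0 := by
    intro j hj
    rw [heval]
    exact Finset.prod_eq_zero (Finset.mem_univ (⟨g j, hg j hj⟩ : Fin m)) (h2 _ j hj rfl)
  have h0 := hCB F hFhom i hvan
  rw [heval] at h0
  exact (Finset.prod_ne_zero_iff.mpr fun t _ => h1 t) h0


lemma cover_lemma {α β : Type*} [DecidableEq α] [DecidableEq β] :
    ∀ (m : ℕ) (S : Finset α) (cl : α → β),
    (∀ b, (S.filter (fun j => cl j = b)).card ≤ m) → S.card ≤ 2 * m →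
    ∃ g : α → ℕ, (∀ j ∈ S, g j < m) ∧
      (∀ t, (S.filter (fun j => g j = t)).card ≤ 2) ∧
      (∀ j ∈ S, ∀ j' ∈ S, g j = g j' → j ≠ j' → cl j ≠ cl j') := by
  intro m
  induction m with
  | zero =>
    intro S cl _ hcard
    have hS : S = ∅ := Finset.card_eq_zero.mp (Nat.le_zero.mp (by simpa using hcard))
    exact ⟨fun _ => 0, by simp [hS], by simp [hS], by simp [hS]⟩
  | succ m ih =>
    intro S cl hcl hcard
    by_cases hS : S.card ≤ m + 1
    · -- all singletons
      refine ⟨fun j => if h : j ∈ S then (S.equivFin ⟨j, h⟩ : ℕ) else 0, ?_, ?_, ?_⟩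
      · intro j hj
        simp only [dif_pos hj]
        exact lt_of_lt_of_le (S.equivFin ⟨j, hj⟩).isLt hS
      · intro t
        refine le_trans (Finset.card_le_one.mpr ?_) one_le_two
        intro a ha b hb
        simp only [Finset.mem_filter] at ha hb
        obtain ⟨ha1, ha2⟩ := ha; obtain ⟨hb1, hb2⟩ := hb
        rw [dif_pos ha1] at ha2; rw [dif_pos hb1] at hb2
        have : S.equivFin ⟨a, ha1⟩ = S.equivFin ⟨b, hb1⟩ := Fin.val_injective (ha2.trans hb2.symm)
        exact Subtype.ext_iff.mp (S.equivFin.injective this)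
      · intro j hj j' hj' hgj hne
        exfalso
        have hgj' : (S.equivFin ⟨j, hj⟩ : ℕ) = (S.equivFin ⟨j', hj'⟩ : ℕ) := by
          simpa [dif_pos hj, dif_pos hj'] using hgj
        exact hne (Subtype.ext_iff.mp (S.equivFin.injective (Fin.val_injective hgj')))
    · push_neg at hS
      -- S.card ≥ m + 2 : pick top two classes
      have hSne : S.Nonempty := Finset.card_pos.mp (by omega)
      set C : β → ℕ := fun b => (S.filter (fun j => cl j = b)).card with hC
      set T : Finset β := S.image cl with hT
      have hTne : T.Nonempty := hSne.image cl
      obtain ⟨b₁, hb₁T, hb₁max⟩ := T.exists_max_image C hTne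
      -- a second class exists
      have hT2 : (T.erase b₁).Nonempty := by
        by_contra hno
        rw [Finset.not_nonempty_iff_eq_empty] at hno
        have hall : ∀ j ∈ S, cl j = b₁ := by
          intro j hj
          by_contra hne
          have : cl j ∈ T.erase b₁ := Finset.mem_erase.mpr ⟨hne, Finset.mem_image_of_mem cl hj⟩
          rw [hno] at this
          exact absurd this (Finset.notMem_empty _)
        have heq : S.filter (fun j => cl j = b₁) = S := Finset.filter_eq_self.mpr hall
        have hfull := hcl b₁
        rw [heq] at hfull
        omega
      obtain ⟨b₂, hb₂T', hb₂max⟩ := (T.erase b₁).exists_max_image C hT2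
      have hb₂ne : b₂ ≠ b₁ := (Finset.mem_erase.mp hb₂T').1
      have hb₂T : b₂ ∈ T := (Finset.mem_erase.mp hb₂T').2
      obtain ⟨j₁, hj₁S, hj₁⟩ := Finset.mem_image.mp hb₁T
      obtain ⟨j₂, hj₂S, hj₂⟩ := Finset.mem_image.mp hb₂T
      have hjne : j₁ ≠ j₂ := fun h => hb₂ne (by rw [← hj₂, ← h, hj₁])
      set S' : Finset α := (S.erase j₁).erase j₂ with hS'
      have hmemS' : ∀ x, x ∈ S' ↔ x ≠ j₂ ∧ x ≠ j₁ ∧ x ∈ S := by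
        intro x
        simp [hS', Finset.mem_erase, and_assoc]
      have hj₂e : j₂ ∈ S.erase j₁ := Finset.mem_erase.mpr ⟨hjne.symm, hj₂S⟩
      have hcardS' : S'.card = S.card - 2 := by
        rw [hS', Finset.card_erase_of_mem hj₂e, Finset.card_erase_of_mem hj₁S]
        omega
      have hkey : ∀ b, b ≠ b₁ → b ≠ b₂ → C b ≤ m := by
        intro b hne1 hne2
        by_contra hgt
        push_neg at hgt
        have hbT : b ∈ T := by
          have hgt' : m < (S.filter (fun j => cl j = b)).card := hgt
          have hfe : (S.filter (fun j => cl j = b)).Nonempty := Finset.card_pos.mp (by omega)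
          obtain ⟨x, hx⟩ := hfe
          rw [Finset.mem_filter] at hx
          exact hx.2 ▸ Finset.mem_image_of_mem cl hx.1
        have hle1 : C b ≤ C b₂ := hb₂max b (Finset.mem_erase.mpr ⟨hne1, hbT⟩)
        have hle2 : C b₂ ≤ C b₁ := hb₁max b₂ hb₂T
        have hsub : ({b₁, b₂, b} : Finset β) ⊆ T := by
          intro x hx
          simp only [Finset.mem_insert, Finset.mem_singleton] at hx
          rcases hx with rfl | rfl | rfl <;> assumption
        have htotal : ∑ x ∈ T, C x = S.card :=
          (Finset.card_eq_sum_card_fiberwise (fun x hx => Finset.mem_image_of_mem cl hx)).symm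
        have hsum3 : ∑ x ∈ ({b₁, b₂, b} : Finset β), C x = C b₁ + C b₂ + C b := by
          rw [Finset.sum_insert (by simp [hb₂ne.symm, hne1.symm]),
            Finset.sum_insert (by simp [hne2.symm]), Finset.sum_singleton, add_assoc]
        have hsum : C b₁ + C b₂ + C b ≤ S.card := by
          rw [← hsum3, ← htotal]
          exact Finset.sum_le_sum_of_subset hsub
        omega
      have hcl' : ∀ b, (S'.filter (fun j => cl j = b)).card ≤ m := by
        intro b
        by_cases h1 : b = b₁
        · rw [h1]
          have hsub : S'.filter (fun j => cl j = b₁) ⊆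
              (S.filter (fun j => cl j = b₁)).erase j₁ := by
            intro x hx
            rw [Finset.mem_filter] at hx
            obtain ⟨hx1, hx2⟩ := hx
            rw [hmemS'] at hx1
            exact Finset.mem_erase.mpr ⟨hx1.2.1, Finset.mem_filter.mpr ⟨hx1.2.2, hx2⟩⟩
          have hc : ((S.filter (fun j => cl j = b₁)).erase j₁).card ≤ m := by
            rw [Finset.card_erase_of_mem (Finset.mem_filter.mpr ⟨hj₁S, hj₁⟩)]
            have := hcl b₁
            omega
          exact le_trans (Finset.card_le_card hsub) hc
        · by_cases h2 : b = b₂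
          · rw [h2]
            have hsub : S'.filter (fun j => cl j = b₂) ⊆
                (S.filter (fun j => cl j = b₂)).erase j₂ := by
              intro x hx
              rw [Finset.mem_filter] at hx
              obtain ⟨hx1, hx2⟩ := hx
              rw [hmemS'] at hx1
              exact Finset.mem_erase.mpr ⟨hx1.1, Finset.mem_filter.mpr ⟨hx1.2.2, hx2⟩⟩
            have hc : ((S.filter (fun j => cl j = b₂)).erase j₂).card ≤ m := by
              rw [Finset.card_erase_of_mem (Finset.mem_filter.mpr ⟨hj₂S, hj₂⟩)]
              have := hcl b₂
              omega
            exact le_trans (Finset.card_le_card hsub) hc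
          · have hsub : S'.filter (fun j => cl j = b) ⊆ S.filter (fun j => cl j = b) :=
              Finset.filter_subset_filter _ (fun x hx => ((hmemS' x).mp hx).2.2)
            exact le_trans (Finset.card_le_card hsub) (hkey b h1 h2)
      obtain ⟨g', hg'1, hg'2, hg'3⟩ := ih S' cl hcl' (by omega)
      classical
      refine ⟨fun j => if j = j₁ ∨ j = j₂ then m else g' j, ?_, ?_, ?_⟩
      · intro j hj
        by_cases h : j = j₁ ∨ j = j₂
        · simp only [if_pos h]
          omega
        · simp only [if_neg h]
          push_neg at h
          have : j ∈ S' := (hmemS' j).mpr ⟨h.2, h.1, hj⟩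
          exact lt_trans (hg'1 j this) (Nat.lt_succ_self m)
      · intro t
        by_cases ht : t = m
        · have hsub : S.filter (fun j => (if j = j₁ ∨ j = j₂ then m else g' j) = t) ⊆
              {j₁, j₂} := by
            intro x hx
            rw [Finset.mem_filter] at hx
            obtain ⟨hx1, hx2⟩ := hx
            by_contra hxn
            simp only [Finset.mem_insert, Finset.mem_singleton] at hxn
            push_neg at hxn
            simp only [if_neg (show ¬(x = j₁ ∨ x = j₂) by tauto)] at hx2
            have hxS' : x ∈ S' := (hmemS' x).mpr ⟨hxn.2, hxn.1, hx1⟩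
            have := hg'1 x hxS'
            omega
          exact le_trans (Finset.card_le_card hsub)
            (le_trans (Finset.card_insert_le _ _) (by simp))
        · have hsub : S.filter (fun j => (if j = j₁ ∨ j = j₂ then m else g' j) = t) ⊆
              S'.filter (fun j => g' j = t) := by
            intro x hx
            rw [Finset.mem_filter] at hx
            obtain ⟨hx1, hx2⟩ := hx
            by_cases h : x = j₁ ∨ x = j₂
            · simp only [if_pos h] at hx2
              exact absurd hx2.symm ht
            · simp only [if_neg h] at hx2
              push_neg at h
              exact Finset.mem_filter.mpr ⟨(hmemS' x).mpr ⟨h.2, h.1, hx1⟩, hx2⟩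
          exact le_trans (Finset.card_le_card hsub) (hg'2 t)
      · intro j hj j' hj' hgj hne
        by_cases h : j = j₁ ∨ j = j₂ <;> by_cases h' : j' = j₁ ∨ j' = j₂
        · -- both in the pair
          rcases h with rfl | rfl <;> rcases h' with rfl | rfl
          · exact absurd rfl hne
          · rw [hj₁, hj₂]
            exact hb₂ne.symm
          · rw [hj₁, hj₂]
            exact hb₂ne
          · exact absurd rfl hne
        · exfalso
          simp only [if_pos h, if_neg h'] at hgj
          push_neg at h'
          have : j' ∈ S' := (hmemS' j').mpr ⟨h'.2, h'.1, hj'⟩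
          exact absurd hgj.symm (Nat.ne_of_lt (hg'1 j' this))
        · exfalso
          simp only [if_neg h, if_pos h'] at hgj
          push_neg at h
          have : j ∈ S' := (hmemS' j).mpr ⟨h.2, h.1, hj⟩
          exact absurd hgj (Nat.ne_of_lt (hg'1 j this))
        · simp only [if_neg h, if_neg h'] at hgj
          push_neg at h h'
          exact hg'3 j ((hmemS' j).mpr ⟨h.2, h.1, hj⟩) j' ((hmemS' j').mpr ⟨h'.2, h'.1, hj'⟩)
            hgj hne


section helpers

variable {n k : ℕ} (v : Fin k → (Fin (n + 1) → ℂ))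

lemma not_mem_span_single
    (hdist : ∀ i j, i ≠ j → ∀ c : ℂ, v j ≠ c • v i)
    (i j : Fin k) (hji : j ≠ i) : v i ∉ Submodule.span ℂ {v j} := by
  intro hmem
  rw [Submodule.mem_span_singleton] at hmem
  obtain ⟨a, ha⟩ := hmem
  exact hdist j i hji a ha.symm

lemma not_mem_span_pair
    (hdist : ∀ i j, i ≠ j → ∀ c : ℂ, v j ≠ c • v i)
    (i a b : Fin k) (hai : a ≠ i) (hbi : b ≠ i)
    (hspans : Submodule.span ℂ {v i, v a} ≠ Submodule.span ℂ {v i, v b}) :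
    v i ∉ Submodule.span ℂ {v a, v b} := by
  intro hmem
  rw [Submodule.mem_span_pair] at hmem
  obtain ⟨x, y, hxy⟩ := hmem
  by_cases hy : y = 0
  · subst hy
    rw [zero_smul, add_zero] at hxy
    exact hdist a i hai x hxy.symm
  by_cases hx : x = 0
  · subst hx
    rw [zero_smul, zero_add] at hxy
    exact hdist b i hbi y hxy.symm
  apply hspans
  have hmema : v a ∈ Submodule.span ℂ ({v i, v b} : Set (Fin (n + 1) → ℂ)) := by
    rw [Submodule.mem_span_pair]
    refine ⟨x⁻¹, -(x⁻¹ * y), ?_⟩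
    rw [← hxy]
    match_scalars <;> field_simp <;> ring
  have hmemb : v b ∈ Submodule.span ℂ ({v i, v a} : Set (Fin (n + 1) → ℂ)) := by
    rw [Submodule.mem_span_pair]
    refine ⟨y⁻¹, -(y⁻¹ * x), ?_⟩
    rw [← hxy]
    match_scalars <;> field_simp <;> ring
  apply le_antisymm <;> rw [Submodule.span_le] <;>
    rw [Set.insert_subset_iff, Set.singleton_subset_iff]
  · exact ⟨Submodule.subset_span (Set.mem_insert _ _), hmema⟩
  · exact ⟨Submodule.subset_span (Set.mem_insert _ _), hmemb⟩

end helpers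

/-- **Cayley–Bacharach collinearity lemma.**
Let `P₁,…,P_k` be distinct points of ℙⁿ over ℂ (represented by nonzero, pairwise
non-proportional vectors `v i ∈ ℂ^{n+1}`) satisfying the Cayley–Bacharach condition
with respect to homogeneous forms of degree `m ≥ 1`.  If `k ≤ 2m + 1`, then the
points lie on a line of ℙⁿ: the vectors `v i` span a subspace of `ℂ^{n+1}` of
dimension at most 2. -/
theorem cayley_bacharach_collinear
    (n m k : ℕ) (hn : 1 ≤ n) (hm : 1 ≤ m) (hk : 1 ≤ k)
    (v : Fin k → (Fin (n + 1) → ℂ))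
    (hv0 : ∀ i, v i ≠ 0)
    (hdist : ∀ i j, i ≠ j → ∀ c : ℂ, v j ≠ c • v i)
    (hCB : ∀ F : MvPolynomial (Fin (n + 1)) ℂ, F.IsHomogeneous m →
      ∀ i : Fin k, (∀ j, j ≠ i → MvPolynomial.eval (v j) F = 0) →
        MvPolynomial.eval (v i) F = 0)
    (hkm : k ≤ 2 * m + 1) :
    Module.finrank ℂ ↥(Submodule.span ℂ (Set.range v)) ≤ 2 := by
  classical
  by_contra hcon
  push_neg at hcon
  -- a vector avoiding any small subspace
  have hexistsc : ∀ W : Submodule ℂ (Fin (n + 1) → ℂ), Module.finrank ℂ ↥W ≤ 2 →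
      ∃ c, v c ∉ W := by
    intro W hW
    by_contra hall
    push_neg at hall
    have hle : Submodule.span ℂ (Set.range v) ≤ W :=
      Submodule.span_le.mpr (by rintro _ ⟨j, rfl⟩; exact hall j)
    have := Submodule.finrank_mono hle
    omega
  by_cases hbig : ∃ W : Submodule ℂ (Fin (n + 1) → ℂ), Module.finrank ℂ ↥W ≤ 2 ∧
      m + 2 ≤ (Finset.univ.filter (fun j => v j ∈ W)).card
  · -- Case 1 : a line with many points
    obtain ⟨W, hW2, hWcard⟩ := hbig
    obtain ⟨c, hc⟩ := hexistsc W hW2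
    set T : Finset (Fin k) := Finset.univ.filter (fun j => v j ∈ W) with hT
    set R : Finset (Fin k) := (Finset.univ \ T).erase c with hR
    have hcT : c ∈ Finset.univ \ T := by simp [hT, hc]
    have hcards : T.card + R.card + 1 = k := by
      have h1 : (Finset.univ \ T).card = k - T.card := by
        rw [Finset.card_sdiff_of_subset (Finset.subset_univ T)]
        simp
      have h2 : R.card = (Finset.univ \ T).card - 1 := by
        rw [hR, Finset.card_erase_of_mem hcT]
      have h3 : T.card ≤ k := le_trans (Finset.card_le_card (Finset.subset_univ T)) (by simp)
      have h4 : 1 ≤ (Finset.univ \ T).card := Finset.card_pos.mpr ⟨c, hcT⟩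
      omega
    have hRm : R.card + 2 ≤ m := by omega
    set e := R.equivFin with he
    set g : Fin k → ℕ := fun j => if j ∈ T then 0 else if h : j ∈ R then (e ⟨j, h⟩ : ℕ) + 1 else 0
      with hg
    refine cb_reduction hm v hCB c g ?_ ?_
    · intro j hj
      by_cases h1 : j ∈ T
      · simp only [hg, if_pos h1]
        omega
      · by_cases h2 : j ∈ R
        · simp only [hg, if_neg h1, dif_pos h2]
          have := (e ⟨j, h2⟩).isLt
          omega
        · simp only [hg, if_neg h1, dif_neg h2]
          omega
    · intro t ht
      by_cases ht0 : t = 0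
      · subst ht0
        intro hmem
        apply hc
        have hsub : v '' {j | j ≠ c ∧ g j = 0} ⊆ (W : Set (Fin (n + 1) → ℂ)) := by
          rintro _ ⟨j, ⟨hjc, hj0⟩, rfl⟩
          by_cases h1 : j ∈ T
          · simpa [hT] using h1
          · exfalso
            have h2 : j ∈ R := by
              rw [hR]
              exact Finset.mem_erase.mpr ⟨hjc, by simp [h1]⟩
            simp only [hg, if_neg h1, dif_pos h2] at hj0
            omega
        exact Submodule.span_le.mpr hsub hmem
      · -- t ≥ 1 : at most one point in this slot
        have hsingle : ∀ j j', (j ≠ c ∧ g j = t) → (j' ≠ c ∧ g j' = t) → j = j' := by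
          rintro j j' ⟨hjc, hjt⟩ ⟨hj'c, hj't⟩
          have hmemR : ∀ x, x ≠ c → g x = t → ∃ h : x ∈ R, (e ⟨x, h⟩ : ℕ) + 1 = t := by
            intro x hxc hxt
            by_cases h1 : x ∈ T
            · simp only [hg, if_pos h1] at hxt
              exact absurd hxt.symm ht0
            · by_cases h2 : x ∈ R
              · simp only [hg, if_neg h1, dif_pos h2] at hxt
                exact ⟨h2, hxt⟩
              · simp only [hg, if_neg h1, dif_neg h2] at hxt
                exact absurd hxt.symm ht0
          obtain ⟨h2, hv2⟩ := hmemR j hjc hjt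
          obtain ⟨h2', hv2'⟩ := hmemR j' hj'c hj't
          have : e ⟨j, h2⟩ = e ⟨j', h2'⟩ := Fin.val_injective (by omega)
          exact Subtype.ext_iff.mp (e.injective this)
        rcases Set.eq_empty_or_nonempty {j | j ≠ c ∧ g j = t} with hE | ⟨j₀, hj₀⟩
        · rw [hE]
          simp only [Set.image_empty, Submodule.span_empty, Submodule.mem_bot]
          exact hv0 c
        · have hsub : {j | j ≠ c ∧ g j = t} ⊆ {j₀} := fun j hj => hsingle j j₀ hj hj₀
          intro hmem
          have hmem' : v c ∈ Submodule.span ℂ {v j₀} := by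
            refine Submodule.span_mono ?_ hmem
            intro x hx
            obtain ⟨j, hj, rfl⟩ := hx
            rw [hsub hj]
            exact rfl
          exact not_mem_span_single v hdist c j₀ hj₀.1 hmem'
  · -- Case 2 : every line contains at most m+1 points
    push_neg at hbig
    set i : Fin k := ⟨0, hk⟩ with hi
    set S : Finset (Fin k) := Finset.univ.erase i with hS
    have hmemS : ∀ x, x ∈ S ↔ x ≠ i := by intro x; simp [hS]
    have hScard : S.card ≤ 2 * m := by
      rw [hS, Finset.card_erase_of_mem (Finset.mem_univ i)]
      simp only [Finset.card_univ, Fintype.card_fin]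
      omega
    set cl : Fin k → Submodule ℂ (Fin (n + 1) → ℂ) := fun j => Submodule.span ℂ {v i, v j}
      with hcl
    have hclbound : ∀ b, (S.filter (fun j => cl j = b)).card ≤ m := by
      intro b
      rcases Finset.eq_empty_or_nonempty (S.filter (fun j => cl j = b)) with hE | ⟨j₀, hj₀⟩
      · rw [hE]
        simp only [Finset.card_empty]
        omega
      · rw [Finset.mem_filter] at hj₀
        obtain ⟨hj₀S, hj₀b⟩ := hj₀
        -- b has finrank ≤ 2
        have hb2 : Module.finrank ℂ ↥b ≤ 2 := by
          rw [← hj₀b]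
          show Module.finrank ℂ ↥(Submodule.span ℂ ({v i, v j₀} : Set (Fin (n + 1) → ℂ))) ≤ 2
          have h1 : ({v i, v j₀} : Set (Fin (n + 1) → ℂ)) =
              (({v i, v j₀} : Finset (Fin (n + 1) → ℂ)) : Set _) := by simp
          rw [h1]
          refine le_trans (finrank_span_finset_le_card _) ?_
          exact le_trans (Finset.card_insert_le _ _) (by simp)
        have hsub : insert i (S.filter (fun j => cl j = b)) ⊆
            Finset.univ.filter (fun j => v j ∈ b) := by
          intro x hx
          rcases Finset.mem_insert.mp hx with rfl | hx'
          · refine Finset.mem_filter.mpr ⟨Finset.mem_univ _, ?_⟩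
            rw [← hj₀b, hcl]
            exact Submodule.subset_span (Set.mem_insert _ _)
          · rw [Finset.mem_filter] at hx'
            refine Finset.mem_filter.mpr ⟨Finset.mem_univ _, ?_⟩
            rw [← hx'.2, hcl]
            exact Submodule.subset_span (Set.mem_insert_of_mem _ rfl)
        have hiS : i ∉ S.filter (fun j => cl j = b) := by
          intro h
          exact absurd rfl ((hmemS i).mp (Finset.mem_of_mem_filter i h))
        have hcardb := hbig b hb2
        have := Finset.card_le_card hsub
        rw [Finset.card_insert_of_notMem hiS] at this
        omega
    obtain ⟨g, hg1, hg2, hg3⟩ := cover_lemma m S cl hclbound hScard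
    refine cb_reduction hm v hCB i g ?_ ?_
    · intro j hj
      exact hg1 j ((hmemS j).mpr hj)
    · intro t ht
      have hAset : {j | j ≠ i ∧ g j = t} = (↑(S.filter (fun j => g j = t)) : Set (Fin k)) := by
        ext j
        simp only [Set.mem_setOf_eq, Finset.coe_filter, Finset.mem_coe, Set.mem_setOf_eq, hmemS]
      rw [hAset]
      have hc2 := hg2 t
      have h012 : (S.filter (fun j => g j = t)).card = 0 ∨
          (S.filter (fun j => g j = t)).card = 1 ∨
          (S.filter (fun j => g j = t)).card = 2 := by omega
      rcases h012 with h | h | h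
      · rw [Finset.card_eq_zero.mp h]
        simp only [Finset.coe_empty, Set.image_empty, Submodule.span_empty, Submodule.mem_bot]
        exact hv0 i
      · obtain ⟨a, ha⟩ := Finset.card_eq_one.mp h
        have haS : a ∈ S := by
          have : a ∈ S.filter (fun j => g j = t) := by simp [ha]
          exact Finset.mem_of_mem_filter a this
        rw [ha]
        simp only [Finset.coe_singleton, Set.image_singleton]
        exact not_mem_span_single v hdist i a ((hmemS a).mp haS)
      · obtain ⟨a, b, hab, hab'⟩ := Finset.card_eq_two.mp h
        have haF : a ∈ S.filter (fun j => g j = t) := by simp [hab']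
        have hbF : b ∈ S.filter (fun j => g j = t) := by simp [hab']
        rw [Finset.mem_filter] at haF hbF
        have hclne : cl a ≠ cl b :=
          hg3 a haF.1 b hbF.1 (haF.2.trans hbF.2.symm) hab
        rw [hab']
        have : (↑({a, b} : Finset (Fin k)) : Set (Fin k)) = {a, b} := by simp
        rw [this, Set.image_pair]
        exact not_mem_span_pair v hdist i a b ((hmemS a).mp haF.1) ((hmemS b).mp hbF.1) hclne
end

section
/- Let K be a field, let k ≥ 1 be an integer, and let P₁,…,P_c (with c ≥ 1) be distinct points of ℙ^p × ℙ^q over K satisfying the Cayley–Bacharach condition with respect to bihomogeneous forms of bidegree (k,k). Then c ≥ k + 2. -/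
/-- A polynomial in the variables `x₀,…,x_p` (indexed by `Sum.inl`) and `y₀,…,y_q`
(indexed by `Sum.inr`) is bihomogeneous of bidegree `(d, e)` if it is weighted
homogeneous of degree `d` for the weight giving `1` to each `x`-variable and `0` to
each `y`-variable, and weighted homogeneous of degree `e` for the opposite weight. -/
def IsBihomogeneous {K : Type*} [CommSemiring K] {p q : ℕ}
    (F : MvPolynomial (Fin (p + 1) ⊕ Fin (q + 1)) K) (d e : ℕ) : Prop :=
  MvPolynomial.IsWeightedHomogeneous (Sum.elim (fun _ => (1 : ℕ)) (fun _ => 0)) F d ∧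
  MvPolynomial.IsWeightedHomogeneous (Sum.elim (fun _ => (0 : ℕ)) (fun _ => 1)) F e

open MvPolynomial Finset

private lemma cb_aux_sep {n : ℕ} {K : Type*} [Field K] (v v' : Fin n → K)
    (hv : v ≠ 0) (h : ¬ ∃ a : K, v' = a • v) :
    ∃ ψ : Fin n → K, (∑ m, ψ m * v' m) = 0 ∧ (∑ m, ψ m * v m) ≠ 0 := by
  -- turn the hypothesis around: v is not a multiple of v'
  have h' : ¬ ∃ a : K, v = a • v' := by
    rintro ⟨a, ha⟩
    have ha0 : a ≠ 0 := by
      rintro rfl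
      exact hv (by simpa using ha)
    exact h ⟨a⁻¹, by rw [ha, smul_smul, inv_mul_cancel₀ ha0, one_smul]⟩
  by_cases hv' : v' = 0
  · -- just need a functional nonzero on v
    obtain ⟨m0, hm0⟩ : ∃ m0, v m0 ≠ 0 := by
      by_contra hall; push_neg at hall; exact hv (funext hall)
    refine ⟨Pi.single m0 1, ?_, ?_⟩
    · simp [hv']
    · simpa [Pi.single_apply, ite_mul] using hm0
  obtain ⟨m0, hm0⟩ : ∃ m0, v' m0 ≠ 0 := by
    by_contra hall; push_neg at hall; exact hv' (funext hall)
  obtain ⟨m1, hm1⟩ : ∃ m1, v m1 * v' m0 - v' m1 * v m0 ≠ 0 := by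
    by_contra hall; push_neg at hall
    refine h' ⟨v m0 / v' m0, funext fun m => ?_⟩
    have : v m * v' m0 = v' m * v m0 := sub_eq_zero.mp (hall m)
    show v m = (v m0 / v' m0) * v' m
    field_simp
    linear_combination this
  refine ⟨fun m => (if m = m1 then v' m0 else 0) + (if m = m0 then -(v' m1) else 0), ?_, ?_⟩
  · simp only [add_mul, Finset.sum_add_distrib, ite_mul, zero_mul, Finset.sum_ite_eq',
      Finset.mem_univ, if_true]
    ring
  · simp only [add_mul, Finset.sum_add_distrib, ite_mul, zero_mul, Finset.sum_ite_eq',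
      Finset.mem_univ, if_true]
    intro h0
    exact hm1 (by linear_combination h0)

private lemma cb_aux_nonzero {n : ℕ} {K : Type*} [Field K] (v : Fin n → K) (hv : v ≠ 0) :
    ∃ ψ : Fin n → K, (∑ m, ψ m * v m) ≠ 0 := by
  obtain ⟨m0, hm0⟩ : ∃ m0, v m0 ≠ 0 := by
    by_contra hall; push_neg at hall; exact hv (funext hall)
  exact ⟨Pi.single m0 1, by simpa [Pi.single_apply, ite_mul] using hm0⟩

/-- linear form in the `x`-variables -/
private noncomputable def cbLinX {K : Type*} [CommSemiring K] {p q : ℕ}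
    (ψ : Fin (p + 1) → K) : MvPolynomial (Fin (p + 1) ⊕ Fin (q + 1)) K :=
  ∑ m, MvPolynomial.C (ψ m) * MvPolynomial.X (Sum.inl m)

/-- linear form in the `y`-variables -/
private noncomputable def cbLinY {K : Type*} [CommSemiring K] {p q : ℕ}
    (χ : Fin (q + 1) → K) : MvPolynomial (Fin (p + 1) ⊕ Fin (q + 1)) K :=
  ∑ m, MvPolynomial.C (χ m) * MvPolynomial.X (Sum.inr m)

private lemma cbLinX_eval {K : Type*} [CommSemiring K] {p q : ℕ}
    (ψ : Fin (p + 1) → K) (a : Fin (p + 1) → K) (b : Fin (q + 1) → K) :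
    MvPolynomial.eval (Sum.elim a b) (cbLinX (q := q) ψ) = ∑ m, ψ m * a m := by
  simp [cbLinX]

private lemma cbLinY_eval {K : Type*} [CommSemiring K] {p q : ℕ}
    (χ : Fin (q + 1) → K) (a : Fin (p + 1) → K) (b : Fin (q + 1) → K) :
    MvPolynomial.eval (Sum.elim a b) (cbLinY (p := p) χ) = ∑ m, χ m * b m := by
  simp [cbLinY]

private lemma cbLinX_bihom {K : Type*} [CommSemiring K] {p q : ℕ}
    (ψ : Fin (p + 1) → K) : IsBihomogeneous (cbLinX (q := q) ψ) 1 0 := by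
  constructor <;>
  · apply MvPolynomial.IsWeightedHomogeneous.sum
    intro m _
    exact (MvPolynomial.isWeightedHomogeneous_C _ (ψ m)).mul
      (MvPolynomial.isWeightedHomogeneous_X _ _ (Sum.inl m))

private lemma cbLinY_bihom {K : Type*} [CommSemiring K] {p q : ℕ}
    (χ : Fin (q + 1) → K) : IsBihomogeneous (cbLinY (p := p) χ) 0 1 := by
  constructor <;>
  · apply MvPolynomial.IsWeightedHomogeneous.sum
    intro m _
    exact (MvPolynomial.isWeightedHomogeneous_C _ (χ m)).mul
      (MvPolynomial.isWeightedHomogeneous_X _ _ (Sum.inr m))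

private lemma IsBihomogeneous.mul' {K : Type*} [CommSemiring K] {p q : ℕ}
    {F G : MvPolynomial (Fin (p + 1) ⊕ Fin (q + 1)) K} {d e d' e' : ℕ}
    (hF : IsBihomogeneous F d e) (hG : IsBihomogeneous G d' e') :
    IsBihomogeneous (F * G) (d + d') (e + e') :=
  ⟨hF.1.mul hG.1, hF.2.mul hG.2⟩

private lemma IsBihomogeneous.pow' {K : Type*} [CommSemiring K] {p q : ℕ}
    {F : MvPolynomial (Fin (p + 1) ⊕ Fin (q + 1)) K} {d e : ℕ}
    (hF : IsBihomogeneous F d e) (n : ℕ) :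
    IsBihomogeneous (F ^ n) (n * d) (n * e) := by
  induction n with
  | zero => exact ⟨by simpa using MvPolynomial.isWeightedHomogeneous_one _ _,
      by simpa using MvPolynomial.isWeightedHomogeneous_one _ _⟩
  | succ n ih =>
      rw [pow_succ, Nat.succ_mul, Nat.succ_mul]
      exact ih.mul' hF

/-- **Cayley–Bacharach count bound in a product of projective spaces.**
If `c ≥ 1` distinct points of `ℙ^p × ℙ^q` over a field `K` (represented by pairs of
nonzero vectors `(u i, w i)`, two points being distinct iff the pairs are not
componentwise proportional) satisfy the Cayley–Bacharach condition with respect to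
bihomogeneous forms of bidegree `(k, k)` with `k ≥ 1`, then `c ≥ k + 2`. -/
theorem cayley_bacharach_count_bound_product
    (K : Type*) [Field K] (p q k c : ℕ) (hk : 1 ≤ k) (hc : 1 ≤ c)
    (u : Fin c → (Fin (p + 1) → K)) (w : Fin c → (Fin (q + 1) → K))
    (hu0 : ∀ i, u i ≠ 0) (hw0 : ∀ i, w i ≠ 0)
    (hdist : ∀ i j, i ≠ j →
      ¬ ((∃ a : K, u j = a • u i) ∧ (∃ b : K, w j = b • w i)))
    (hCB : ∀ F : MvPolynomial (Fin (p + 1) ⊕ Fin (q + 1)) K, IsBihomogeneous F k k →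
      ∀ i : Fin c, (∀ j, j ≠ i → MvPolynomial.eval (Sum.elim (u j) (w j)) F = 0) →
        MvPolynomial.eval (Sum.elim (u i) (w i)) F = 0) :
    c ≥ k + 2 := by
  by_contra hlt
  push_neg at hlt
  have hck : c - 1 ≤ k := by omega
  set i : Fin c := ⟨0, hc⟩ with hi
  -- a fixed bilinear form not vanishing at `P i`
  obtain ⟨ω, hω⟩ := cb_aux_nonzero (u i) (hu0 i)
  obtain ⟨χ, hχ⟩ := cb_aux_nonzero (w i) (hw0 i)
  set M : MvPolynomial (Fin (p + 1) ⊕ Fin (q + 1)) K := cbLinX ω * cbLinY χ with hM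
  have hMbihom : IsBihomogeneous M 1 1 := (cbLinX_bihom ω).mul' (cbLinY_bihom χ)
  have hMi : MvPolynomial.eval (Sum.elim (u i) (w i)) M ≠ 0 := by
    rw [hM, map_mul, cbLinX_eval, cbLinY_eval]
    exact mul_ne_zero hω hχ
  -- for each other point, a bilinear form vanishing there but not at `P i`
  have hsep : ∀ j : Fin c, j ≠ i →
      ∃ G : MvPolynomial (Fin (p + 1) ⊕ Fin (q + 1)) K, IsBihomogeneous G 1 1 ∧
        MvPolynomial.eval (Sum.elim (u j) (w j)) G = 0 ∧
        MvPolynomial.eval (Sum.elim (u i) (w i)) G ≠ 0 := by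
    intro j hj
    have hd := hdist i j (fun e => hj e.symm)
    rw [not_and_or] at hd
    rcases hd with hd | hd
    · obtain ⟨ψ, hψ0, hψi⟩ := cb_aux_sep (u i) (u j) (hu0 i) hd
      refine ⟨cbLinX ψ * cbLinY χ, (cbLinX_bihom ψ).mul' (cbLinY_bihom χ), ?_, ?_⟩
      · rw [map_mul, cbLinX_eval]; rw [hψ0, zero_mul]
      · rw [map_mul, cbLinX_eval, cbLinY_eval]; exact mul_ne_zero hψi hχ
    · obtain ⟨φ, hφ0, hφi⟩ := cb_aux_sep (w i) (w j) (hw0 i) hd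
      refine ⟨cbLinX ω * cbLinY φ, (cbLinX_bihom ω).mul' (cbLinY_bihom φ), ?_, ?_⟩
      · rw [map_mul, cbLinY_eval]; rw [hφ0, mul_zero]
      · rw [map_mul, cbLinX_eval, cbLinY_eval]; exact mul_ne_zero hω hφi
  choose G hGbihom hGzero hGne using hsep
  -- assemble the form F of bidegree (k, k)
  set s : Finset (Fin c) := Finset.univ.erase i with hs
  have hscard : s.card = c - 1 := by
    rw [hs, Finset.card_erase_of_mem (Finset.mem_univ i), Finset.card_univ, Fintype.card_fin]
  set F : MvPolynomial (Fin (p + 1) ⊕ Fin (q + 1)) K :=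
    (∏ j ∈ s.attach, G j.1 (Finset.ne_of_mem_erase j.2)) * M ^ (k - (c - 1)) with hF
  have hFbihom : IsBihomogeneous F k k := by
    have hprod : IsBihomogeneous (∏ j ∈ s.attach, G j.1 (Finset.ne_of_mem_erase j.2))
        (c - 1) (c - 1) := by
      have h1 : ∑ _j ∈ s.attach, 1 = c - 1 := by
        rw [Finset.sum_const, smul_eq_mul, mul_one, Finset.card_attach, hscard]
      constructor
      · rw [← h1]
        exact MvPolynomial.IsWeightedHomogeneous.prod _ _ _
          (fun j _ => (hGbihom j.1 (Finset.ne_of_mem_erase j.2)).1)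
      · rw [← h1]
        exact MvPolynomial.IsWeightedHomogeneous.prod _ _ _
          (fun j _ => (hGbihom j.1 (Finset.ne_of_mem_erase j.2)).2)
    have hpow : IsBihomogeneous (M ^ (k - (c - 1))) (k - (c - 1)) (k - (c - 1)) := by
      simpa using hMbihom.pow' (k - (c - 1))
    have := hprod.mul' hpow
    rwa [Nat.add_sub_cancel' hck] at this
  -- F vanishes at every point except P i
  have hFvanish : ∀ j, j ≠ i → MvPolynomial.eval (Sum.elim (u j) (w j)) F = 0 := by
    intro j hj
    rw [hF, map_mul, map_prod]
    have hjs : j ∈ s := Finset.mem_erase.mpr ⟨hj, Finset.mem_univ j⟩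
    rw [Finset.prod_eq_zero (Finset.mem_attach s ⟨j, hjs⟩) (hGzero j hj), zero_mul]
  -- but F does not vanish at P i, contradicting Cayley–Bacharach
  have hFi : MvPolynomial.eval (Sum.elim (u i) (w i)) F ≠ 0 := by
    rw [hF, map_mul, map_prod, map_pow]
    exact mul_ne_zero
      (Finset.prod_ne_zero_iff.mpr fun j _ => hGne j.1 (Finset.ne_of_mem_erase j.2))
      (pow_ne_zero _ hMi)
  exact hFi (hCB F hFbihom i hFvanish)
end

section
/- Let k ≥ 1 be an integer and let P₁,…,P_c (with c ≥ 1) be distinct points of ℙ^p × ℙ^q over ℂ, represented by pairs of nonzero vectors (u₁,w₁),…,(u_c,w_c) with uᵢ ∈ ℂ^{p+1} and wᵢ ∈ ℂ^{q+1}, satisfying the Cayley–Bacharach condition with respect to bihomogeneous forms of bidegree (k,k). If c ≤ 2k + 1, then the points lie on a line of ℙ^p × ℙ^q: either u₁,…,u_c are pairwise proportional and w₁,…,w_c span a linear subspace of ℂ^{q+1} of dimension at most 2, or w₁,…,w_c are pairwise proportional and u₁,…,u_c span a linear subspace of ℂ^{p+1} of dimension at most 2. -/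
section CayleyBacharachAux

open MvPolynomial Finset

namespace CBAux

/-- dot product of coefficient vector and point -/
noncomputable def dot {m : ℕ} (a v : Fin m → ℂ) : ℂ := ∑ t, a t * v t

lemma dot_smul {m : ℕ} (a v : Fin m → ℂ) (b : ℂ) : dot a (b • v) = b * dot a v := by
  simp [dot, Finset.mul_sum]; ring_nf; simp [mul_comm, mul_left_comm]

lemma exists_nonzero_dot {m : ℕ} {v : Fin m → ℂ} (hv : v ≠ 0) : ∃ a, dot a v ≠ 0 := by
  obtain ⟨t, ht⟩ := Function.ne_iff.mp hv
  refine ⟨Pi.single t 1, ?_⟩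
  simp [dot, Pi.single_apply]
  simpa using ht

lemma exists_killer {m : ℕ} {W : Submodule ℂ (Fin m → ℂ)} {x : Fin m → ℂ} (hx : x ∉ W) :
    ∃ a, (∀ y ∈ W, dot a y = 0) ∧ dot a x ≠ 0 := by
  obtain ⟨f, hfx, hfW⟩ := W.exists_dual_map_eq_bot_of_notMem hx inferInstance
  have key : ∀ z, dot (fun t => f (Pi.single t 1)) z = f z := by
    intro z
    have e : ∀ t : Fin m, (fun j => if t = j then (1:ℂ) else 0) = Pi.single t 1 := by
      intro t; funext j; simp [Pi.single_apply, eq_comm]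
    rw [LinearMap.pi_apply_eq_sum_univ f z]
    simp only [e]
    simp [dot, mul_comm]
  refine ⟨fun t => f (Pi.single t 1), fun y hy => ?_, ?_⟩
  · rw [key]
    have : f y ∈ W.map f := Submodule.mem_map_of_mem hy
    rwa [hfW, Submodule.mem_bot] at this
  · rw [key]; exact hfx

lemma nonprop_killer {m : ℕ} {x y : Fin m → ℂ} (hx : x ≠ 0)
    (h : ¬ ∃ a : ℂ, y = a • x) : ∃ a, dot a y = 0 ∧ dot a x ≠ 0 := by
  have hxy : x ∉ Submodule.span ℂ {y} := by
    intro hmem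
    obtain ⟨b, hb⟩ := Submodule.mem_span_singleton.mp hmem
    have hb0 : b ≠ 0 := by rintro rfl; simp at hb; exact hx hb.symm
    exact h ⟨b⁻¹, by rw [← hb, smul_smul, inv_mul_cancel₀ hb0, one_smul]⟩
  obtain ⟨a, h1, h2⟩ := exists_killer hxy
  exact ⟨a, h1 y (Submodule.mem_span_singleton_self y), h2⟩

section Poly
open MvPolynomial

variable {p q : ℕ}

/-- the `x`-weight -/
def wX (p q : ℕ) : (Fin (p + 1) ⊕ Fin (q + 1)) → ℕ := Sum.elim (fun _ => 1) (fun _ => 0)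
/-- the `y`-weight -/
def wY (p q : ℕ) : (Fin (p + 1) ⊕ Fin (q + 1)) → ℕ := Sum.elim (fun _ => 0) (fun _ => 1)

noncomputable def xlin (p q : ℕ) (a : Fin (p + 1) → ℂ) :
    MvPolynomial (Fin (p + 1) ⊕ Fin (q + 1)) ℂ :=
  ∑ t, MvPolynomial.C (a t) * MvPolynomial.X (Sum.inl t)

noncomputable def ylin (p q : ℕ) (b : Fin (q + 1) → ℂ) :
    MvPolynomial (Fin (p + 1) ⊕ Fin (q + 1)) ℂ :=
  ∑ t, MvPolynomial.C (b t) * MvPolynomial.X (Sum.inr t)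

lemma eval_xlin (a : Fin (p + 1) → ℂ) (u : Fin (p + 1) → ℂ) (w : Fin (q + 1) → ℂ) :
    MvPolynomial.eval (Sum.elim u w) (xlin p q a) = dot a u := by
  simp [xlin, dot]

lemma eval_ylin (b : Fin (q + 1) → ℂ) (u : Fin (p + 1) → ℂ) (w : Fin (q + 1) → ℂ) :
    MvPolynomial.eval (Sum.elim u w) (ylin p q b) = dot b w := by
  simp [ylin, dot]

lemma xlin_homog_x (a : Fin (p + 1) → ℂ) : IsWeightedHomogeneous (wX p q) (xlin p q a) 1 := by
  apply IsWeightedHomogeneous.sum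
  intro t _
  have := (isWeightedHomogeneous_C (wX p q) (a t)).mul
    (isWeightedHomogeneous_X ℂ (wX p q) (Sum.inl t))
  simpa [wX] using this

lemma xlin_homog_y (a : Fin (p + 1) → ℂ) : IsWeightedHomogeneous (wY p q) (xlin p q a) 0 := by
  apply IsWeightedHomogeneous.sum
  intro t _
  have := (isWeightedHomogeneous_C (wY p q) (a t)).mul
    (isWeightedHomogeneous_X ℂ (wY p q) (Sum.inl t))
  simpa [wY] using this

lemma ylin_homog_x (b : Fin (q + 1) → ℂ) : IsWeightedHomogeneous (wX p q) (ylin p q b) 0 := by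
  apply IsWeightedHomogeneous.sum
  intro t _
  have := (isWeightedHomogeneous_C (wX p q) (b t)).mul
    (isWeightedHomogeneous_X ℂ (wX p q) (Sum.inr t))
  simpa [wX] using this

lemma ylin_homog_y (b : Fin (q + 1) → ℂ) : IsWeightedHomogeneous (wY p q) (ylin p q b) 1 := by
  apply IsWeightedHomogeneous.sum
  intro t _
  have := (isWeightedHomogeneous_C (wY p q) (b t)).mul
    (isWeightedHomogeneous_X ℂ (wY p q) (Sum.inr t))
  simpa [wY] using this

lemma multiset_prod_homog {σ : Type*} (w : σ → ℕ) (d : ℕ)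
    (M : Multiset (MvPolynomial σ ℂ)) (h : ∀ F ∈ M, IsWeightedHomogeneous w F d) :
    IsWeightedHomogeneous w M.prod (Multiset.card M * d) := by
  induction M using Multiset.induction with
  | empty => simpa using isWeightedHomogeneous_one ℂ w
  | cons a s ih =>
    rw [Multiset.prod_cons]
    have h1 : IsWeightedHomogeneous w a d := h a (Multiset.mem_cons_self a s)
    have h2 := ih (fun F hF => h F (Multiset.mem_cons_of_mem hF))
    have := h1.mul h2
    convert this using 1
    simp [Multiset.card_cons]
    ring
end Poly

section Sep
open MvPolynomial

lemma sep {p q k c : ℕ} (u : Fin c → (Fin (p + 1) → ℂ)) (w : Fin c → (Fin (q + 1) → ℂ))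
    (hCB : ∀ F : MvPolynomial (Fin (p + 1) ⊕ Fin (q + 1)) ℂ, IsBihomogeneous F k k →
      ∀ i : Fin c, (∀ j, j ≠ i → MvPolynomial.eval (Sum.elim (u j) (w j)) F = 0) →
        MvPolynomial.eval (Sum.elim (u i) (w i)) F = 0)
    (i : Fin c) (A : Multiset (Fin (p + 1) → ℂ)) (B : Multiset (Fin (q + 1) → ℂ))
    (hA : Multiset.card A = k) (hB : Multiset.card B = k)
    (hAi : ∀ a ∈ A, dot a (u i) ≠ 0) (hBi : ∀ b ∈ B, dot b (w i) ≠ 0)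
    (hkill : ∀ j, j ≠ i → (∃ a ∈ A, dot a (u j) = 0) ∨ (∃ b ∈ B, dot b (w j) = 0)) :
    False := by
  set F : MvPolynomial (Fin (p + 1) ⊕ Fin (q + 1)) ℂ :=
    (A.map (xlin p q)).prod * (B.map (ylin p q)).prod with hF
  have hFhom : IsBihomogeneous F k k := by
    constructor
    · have h1 := multiset_prod_homog (wX p q) 1 (A.map (xlin p q))
        (by intro G hG; obtain ⟨a, _, rfl⟩ := Multiset.mem_map.mp hG; exact xlin_homog_x a)
      have h2 := multiset_prod_homog (wX p q) 0 (B.map (ylin p q))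
        (by intro G hG; obtain ⟨b, _, rfl⟩ := Multiset.mem_map.mp hG; exact ylin_homog_x b)
      have := h1.mul h2
      simpa [wX, IsBihomogeneous, hA, hF] using this
    · have h1 := multiset_prod_homog (wY p q) 0 (A.map (xlin p q))
        (by intro G hG; obtain ⟨a, _, rfl⟩ := Multiset.mem_map.mp hG; exact xlin_homog_y a)
      have h2 := multiset_prod_homog (wY p q) 1 (B.map (ylin p q))
        (by intro G hG; obtain ⟨b, _, rfl⟩ := Multiset.mem_map.mp hG; exact ylin_homog_y b)
      have := h1.mul h2
      simpa [wY, IsBihomogeneous, hB, hF] using this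
  have heval : ∀ j, MvPolynomial.eval (Sum.elim (u j) (w j)) F =
      (A.map (fun a => dot a (u j))).prod * (B.map (fun b => dot b (w j))).prod := by
    intro j
    rw [hF, map_mul, map_multiset_prod, map_multiset_prod, Multiset.map_map, Multiset.map_map]
    congr 2
    · exact Multiset.map_congr rfl (fun a _ => eval_xlin a (u j) (w j))
    · exact Multiset.map_congr rfl (fun b _ => eval_ylin b (u j) (w j))
  have h0 := hCB F hFhom i (by
    intro j hj
    rw [heval]
    rcases hkill j hj with ⟨a, ha, ha0⟩ | ⟨b, hb, hb0⟩
    · apply mul_eq_zero_of_left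
      apply Multiset.prod_eq_zero
      have := Multiset.mem_map_of_mem (fun a => dot a (u j)) ha
      simpa [ha0] using this
    · apply mul_eq_zero_of_right
      apply Multiset.prod_eq_zero
      have := Multiset.mem_map_of_mem (fun b => dot b (w j)) hb
      simpa [hb0] using this)
  rw [heval] at h0
  rcases mul_eq_zero.mp h0 with h | h
  · obtain ⟨a, ha, ha0⟩ := Multiset.mem_map.mp (Multiset.prod_eq_zero_iff.mp h)
    exact hAi a ha ha0
  · obtain ⟨b, hb, hb0⟩ := Multiset.mem_map.mp (Multiset.prod_eq_zero_iff.mp h)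
    exact hBi b hb hb0

end Sep

section CBUsec

/-- Cayley–Bacharach-type condition for a family of points indexed by a finset,
with a budget of `n` linear killers. -/
def CBU {m c : ℕ} (v : Fin c → (Fin (m + 1) → ℂ)) (s : Finset (Fin c)) (n : ℕ) : Prop :=
  ∀ i ∈ s, ∀ A : Multiset (Fin (m + 1) → ℂ), Multiset.card A ≤ n →
    (∀ a ∈ A, dot a (v i) ≠ 0) → (∀ j ∈ s, j ≠ i → ∃ a ∈ A, dot a (v j) = 0) → False

lemma CBU.mono {m c : ℕ} {v : Fin c → (Fin (m + 1) → ℂ)} {s : Finset (Fin c)} {n n' : ℕ}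
    (h : CBU v s n) (hn : n' ≤ n) : CBU v s n' :=
  fun i hi A hA h1 h2 => h i hi A (hA.trans hn) h1 h2

lemma CBU.reduce {m c : ℕ} {v : Fin c → (Fin (m + 1) → ℂ)} {s s' : Finset (Fin c)} {n : ℕ}
    (h : CBU v s (n + 1)) (hss : s' ⊆ s) (g : Fin (m + 1) → ℂ)
    (hg0 : ∀ j ∈ s, j ∉ s' → dot g (v j) = 0) (hg1 : ∀ j ∈ s', dot g (v j) ≠ 0) :
    CBU v s' n := by
  intro i hi A hA h1 h2
  refine h i (hss hi) (g ::ₘ A) (by simpa using hA) ?_ ?_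
  · intro a ha
    rcases Multiset.mem_cons.mp ha with rfl | ha
    · exact hg1 i hi
    · exact h1 a ha
  · intro j hj hji
    by_cases hj' : j ∈ s'
    · obtain ⟨a, ha, ha0⟩ := h2 j hj' hji
      exact ⟨a, Multiset.mem_cons_of_mem ha, ha0⟩
    · exact ⟨g, Multiset.mem_cons_self g A, hg0 j hj hj'⟩

/-- A nonempty family of at most `n+1` pairwise non-proportional points cannot satisfy
the Cayley–Bacharach condition with budget `n`. -/
lemma cbu_small {m c : ℕ} {v : Fin c → (Fin (m + 1) → ℂ)} {s : Finset (Fin c)} {n : ℕ}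
    (hv0 : ∀ i, v i ≠ 0)
    (hprop : ∀ i j : Fin c, i ≠ j → ¬ ∃ a : ℂ, v j = a • v i)
    (hne : s.Nonempty) (hcard : s.card ≤ n + 1) (h : CBU v s n) : False := by
  classical
  obtain ⟨i, hi⟩ := hne
  have hkill : ∀ j ∈ s.erase i, ∃ a, dot a (v j) = 0 ∧ dot a (v i) ≠ 0 := by
    intro j hj
    exact nonprop_killer (hv0 i) (hprop i j (Ne.symm (Finset.mem_erase.mp hj).1))
  choose f hf0 hfi using hkill
  set A : Multiset (Fin (m + 1) → ℂ) :=
    (s.erase i).attach.val.map (fun j => f j.1 j.2) with hAdef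
  have hAcard : Multiset.card A ≤ n := by
    have : Multiset.card A = (s.erase i).card := by
      simp [hAdef, Finset.card]
      exact (Multiset.card_map _ _).trans Multiset.card_attach
    rw [this, Finset.card_erase_of_mem hi]
    omega
  refine h i hi A hAcard ?_ ?_
  · intro a ha
    obtain ⟨j, _, rfl⟩ := Multiset.mem_map.mp ha
    exact hfi j.1 j.2
  · intro j hj hji
    have hjmem : j ∈ s.erase i := Finset.mem_erase.mpr ⟨hji, hj⟩
    refine ⟨f j hjmem, ?_, hf0 j hjmem⟩
    exact Multiset.mem_map.mpr ⟨⟨j, hjmem⟩, Multiset.mem_attach _ _, rfl⟩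

end CBUsec

section Rank

lemma rank_le_card_aux {m c : ℕ} (v : Fin c → (Fin (m + 1) → ℂ)) (s : Finset (Fin c)) :
    Module.finrank ℂ ↥(Submodule.span ℂ (v '' ↑s)) ≤ s.card := by
  classical
  have h1 : v '' ↑s = ↑(s.image v) := by simp [Finset.coe_image]
  rw [h1]
  exact le_trans (finrank_span_finset_le_card (s.image v)) Finset.card_image_le

lemma rank_le_two {m c : ℕ} (v : Fin c → (Fin (m + 1) → ℂ))
    (hv0 : ∀ i, v i ≠ 0)
    (hprop : ∀ i j : Fin c, i ≠ j → ¬ ∃ a : ℂ, v j = a • v i) :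
    ∀ (n : ℕ) (s : Finset (Fin c)), s.card ≤ 2 * n + 1 → CBU v s n →
      Module.finrank ℂ ↥(Submodule.span ℂ (v '' ↑s)) ≤ 2 := by
  classical
  intro n
  induction n with
  | zero =>
    intro s hs _
    exact le_trans (rank_le_card_aux v s) (by omega)
  | succ n ih =>
    intro s hs hcb
    by_contra hr
    push_neg at hr
    by_cases hsmall : s.card ≤ n + 2
    · rcases Finset.eq_empty_or_nonempty s with rfl | hne
      · rw [Finset.coe_empty, Set.image_empty, Submodule.span_empty] at hr
        simp at hr
      · exact cbu_small hv0 hprop hne (by omega) hcb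
    push_neg at hsmall
    have h2card : 1 < s.card := by omega
    obtain ⟨P, hP, Q, hQ, hPQ⟩ := Finset.one_lt_card.mp h2card
    set W2 : Submodule ℂ (Fin (m + 1) → ℂ) := Submodule.span ℂ {v P, v Q} with hW2
    have hRex : ∃ R ∈ s, v R ∉ W2 := by
      by_contra hall
      push_neg at hall
      have hle : Submodule.span ℂ (v '' ↑s) ≤ W2 := by
        rw [Submodule.span_le]
        rintro x ⟨j, hj, rfl⟩
        exact hall j hj
      have hmono : Module.finrank ℂ ↥(Submodule.span ℂ (v '' ↑s)) ≤ Module.finrank ℂ ↥W2 :=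
        Submodule.finrank_mono hle
      have hW2le : Module.finrank ℂ ↥W2 ≤ 2 := by
        have he : ({v P, v Q} : Set (Fin (m + 1) → ℂ)) = ↑({v P, v Q} : Finset (Fin (m + 1) → ℂ)) := by
          simp
        rw [hW2, he]
        refine le_trans (finrank_span_finset_le_card _) ?_
        refine le_trans (Finset.card_insert_le _ _) ?_
        simp
      omega
    obtain ⟨R, hR, hRW⟩ := hRex
    obtain ⟨g, hg0, hgR⟩ := exists_killer hRW
    set s' := s.filter (fun j => dot g (v j) ≠ 0) with hs'
    have hs'sub : s' ⊆ s := Finset.filter_subset _ _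
    have hcb' : CBU v s' n := hcb.reduce hs'sub g
      (fun j hj hj' => by
        by_contra h0
        exact hj' (Finset.mem_filter.mpr ⟨hj, h0⟩))
      (fun j hj => (Finset.mem_filter.mp hj).2)
    have hRs' : R ∈ s' := Finset.mem_filter.mpr ⟨hR, hgR⟩
    have hPs' : P ∉ s' := fun h =>
      (Finset.mem_filter.mp h).2 (hg0 _ (Submodule.subset_span (by simp)))
    have hQs' : Q ∉ s' := fun h =>
      (Finset.mem_filter.mp h).2 (hg0 _ (Submodule.subset_span (by simp)))
    have hs'card : s'.card ≤ s.card - 2 := by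
      have hsub2 : s' ⊆ (s.erase P).erase Q := by
        intro j hj
        refine Finset.mem_erase.mpr ⟨?_, Finset.mem_erase.mpr ⟨?_, hs'sub hj⟩⟩
        · rintro rfl; exact hQs' hj
        · rintro rfl; exact hPs' hj
      have := Finset.card_le_card hsub2
      rwa [Finset.card_erase_of_mem (Finset.mem_erase.mpr ⟨Ne.symm hPQ, hQ⟩),
        Finset.card_erase_of_mem hP] at this
    by_cases hs'small : s'.card ≤ n + 1
    · exact cbu_small hv0 hprop ⟨R, hRs'⟩ hs'small hcb'
    push_neg at hs'small
    have hrank' := ih s' (by omega) hcb'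
    set V := Submodule.span ℂ (v '' ↑s') with hV
    by_cases hallV : ∀ j ∈ s, v j ∈ V
    · have hle : Submodule.span ℂ (v '' ↑s) ≤ V := by
        rw [Submodule.span_le]
        rintro x ⟨j, hj, rfl⟩
        exact hallV j hj
      exact absurd (le_trans (Submodule.finrank_mono hle) hrank') (by omega)
    push_neg at hallV
    obtain ⟨i, hi, hiV⟩ := hallV
    have his' : i ∉ s' := fun h =>
      hiV (Submodule.subset_span ⟨i, Finset.mem_coe.mpr h, rfl⟩)
    obtain ⟨g2, hg20, hg2i⟩ := exists_killer hiV
    set t := (s.erase i) \ s' with ht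
    have htkill : ∀ j ∈ t, ∃ a, dot a (v j) = 0 ∧ dot a (v i) ≠ 0 := by
      intro j hj
      obtain ⟨hj1, _⟩ := Finset.mem_sdiff.mp hj
      exact nonprop_killer (hv0 i) (hprop i j (Ne.symm (Finset.mem_erase.mp hj1).1))
    choose f hf0 hfi using htkill
    set A : Multiset (Fin (m + 1) → ℂ) :=
      g2 ::ₘ (t.attach.val.map (fun j => f j.1 j.2)) with hA
    have htcard : t.card ≤ n := by
      have hsub : s' ⊆ s.erase i := fun j hj =>
        Finset.mem_erase.mpr ⟨fun h => his' (h ▸ hj), hs'sub hj⟩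
      have h1 := Finset.card_sdiff_of_subset hsub
      have h2 := Finset.card_erase_of_mem hi
      rw [← ht] at h1
      omega
    have hAcard : Multiset.card A ≤ n + 1 := by
      have hmapcard : Multiset.card (t.attach.val.map (fun j => f j.1 j.2)) = t.card := by
        rw [Multiset.card_map]
        exact Finset.card_attach
      rw [hA, Multiset.card_cons, hmapcard]
      omega
    refine hcb i hi A hAcard ?_ ?_
    · intro a ha
      rcases Multiset.mem_cons.mp ha with rfl | ha
      · exact hg2i
      · obtain ⟨j, _, rfl⟩ := Multiset.mem_map.mp ha
        exact hfi j.1 j.2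
    · intro j hj hji
      by_cases hjs' : j ∈ s'
      · exact ⟨g2, Multiset.mem_cons_self _ _,
          hg20 _ (Submodule.subset_span ⟨j, Finset.mem_coe.mpr hjs', rfl⟩)⟩
      · have hjt : j ∈ t := Finset.mem_sdiff.mpr ⟨Finset.mem_erase.mpr ⟨hji, hj⟩, hjs'⟩
        exact ⟨f j hjt, Multiset.mem_cons_of_mem
          (Multiset.mem_map.mpr ⟨⟨j, hjt⟩, Multiset.mem_attach _ _, rfl⟩), hf0 j hjt⟩

end Rank

section PropHelpers

lemma prop_symm {m : ℕ} {x y : Fin m → ℂ} (hy : y ≠ 0) (h : ∃ a : ℂ, y = a • x) :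
    ∃ a : ℂ, x = a • y := by
  obtain ⟨a, rfl⟩ := h
  have ha : a ≠ 0 := by rintro rfl; simp at hy
  exact ⟨a⁻¹, by rw [smul_smul, inv_mul_cancel₀ ha, one_smul]⟩

lemma prop_trans {m : ℕ} {x y z : Fin m → ℂ} (h1 : ∃ a : ℂ, y = a • x)
    (h2 : ∃ b : ℂ, z = b • y) : ∃ d : ℂ, z = d • x := by
  obtain ⟨a, rfl⟩ := h1
  obtain ⟨b, rfl⟩ := h2
  exact ⟨b * a, (mul_smul b a x).symm⟩

end PropHelpers

section Dich

open Classical in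
lemma dichotomy {p q k c : ℕ} (hk : 1 ≤ k)
    (u : Fin c → (Fin (p + 1) → ℂ)) (w : Fin c → (Fin (q + 1) → ℂ))
    (hu0 : ∀ i, u i ≠ 0) (hw0 : ∀ i, w i ≠ 0)
    (hdist : ∀ i j, i ≠ j →
      ¬ ((∃ a : ℂ, u j = a • u i) ∧ (∃ b : ℂ, w j = b • w i)))
    (hCB : ∀ F : MvPolynomial (Fin (p + 1) ⊕ Fin (q + 1)) ℂ, IsBihomogeneous F k k →
      ∀ i : Fin c, (∀ j, j ≠ i → MvPolynomial.eval (Sum.elim (u j) (w j)) F = 0) →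
        MvPolynomial.eval (Sum.elim (u i) (w i)) F = 0)
    (hck : c ≤ 2 * k + 1) (i : Fin c) :
    k + 1 ≤ ((Finset.univ.erase i).filter (fun j => ∃ b : ℂ, w j = b • w i)).card ∨
    k + 1 ≤ ((Finset.univ.erase i).filter (fun j => ∃ a : ℂ, u j = a • u i)).card := by
  classical
  by_contra hcon
  push_neg at hcon
  obtain ⟨hw_small, hu_small⟩ := hcon
  set O := Finset.univ.erase i with hO
  have hOcard : O.card = c - 1 := by
    rw [hO, Finset.card_erase_of_mem (Finset.mem_univ i), Finset.card_univ, Fintype.card_fin]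
  set Aw := O.filter (fun j => ∃ b : ℂ, w j = b • w i) with hAw
  set Bu := O.filter (fun j => ∃ a : ℂ, u j = a • u i) with hBu
  set S1 := O.filter (fun j => ¬ ∃ a : ℂ, u j = a • u i) with hS1
  have hAwk : Aw.card ≤ k := by omega
  have hBuk : Bu.card ≤ k := by omega
  have hAsub : Aw ⊆ S1 := by
    intro j hj
    obtain ⟨hjO, hjw⟩ := Finset.mem_filter.mp hj
    refine Finset.mem_filter.mpr ⟨hjO, fun hju => ?_⟩
    exact hdist i j (Ne.symm (Finset.mem_erase.mp hjO).1) ⟨hju, hjw⟩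
  have hS1card : S1.card = O.card - Bu.card := by
    rw [hS1, Finset.filter_not, Finset.card_sdiff_of_subset (Finset.filter_subset _ _), ← hBu]
  set n0 := max Aw.card (c - 1 - k) with hn0
  have hn0le : n0 ≤ S1.card := max_le (Finset.card_le_card hAsub) (by omega)
  obtain ⟨T, hTA, hTS1, hTcard⟩ := Finset.exists_subsuperset_card_eq hAsub
    (le_max_left _ _) hn0le
  have hTk : T.card ≤ k := by
    rw [hTcard]
    exact max_le hAwk (by omega)
  have hTge : c - 1 - k ≤ T.card := by
    rw [hTcard]
    exact le_max_right _ _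
  set T' := O \ T with hT'
  have hT'card : T'.card ≤ k := by
    rw [hT', Finset.card_sdiff_of_subset (hTS1.trans (Finset.filter_subset _ _))]
    omega
  -- x-killers on T
  have hkx : ∀ j ∈ T, ∃ a, dot a (u j) = 0 ∧ dot a (u i) ≠ 0 := by
    intro j hj
    have := Finset.mem_filter.mp (hTS1 hj)
    exact nonprop_killer (hu0 i) this.2
  -- y-killers on T'
  have hky : ∀ j ∈ T', ∃ b, dot b (w j) = 0 ∧ dot b (w i) ≠ 0 := by
    intro j hj
    obtain ⟨hjO, hjT⟩ := Finset.mem_sdiff.mp hj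
    refine nonprop_killer (hw0 i) (fun hw => hjT (hTA (Finset.mem_filter.mpr ⟨hjO, hw⟩)))
  choose fx hfx0 hfxi using hkx
  choose fy hfy0 hfyi using hky
  obtain ⟨a0, ha0⟩ := exists_nonzero_dot (hu0 i)
  obtain ⟨b0, hb0⟩ := exists_nonzero_dot (hw0 i)
  set A : Multiset (Fin (p + 1) → ℂ) :=
    (T.attach.val.map (fun j => fx j.1 j.2)) + Multiset.replicate (k - T.card) a0 with hA
  set B : Multiset (Fin (q + 1) → ℂ) :=
    (T'.attach.val.map (fun j => fy j.1 j.2)) + Multiset.replicate (k - T'.card) b0 with hB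
  have hAcard : Multiset.card A = k := by
    rw [hA, Multiset.card_add, Multiset.card_replicate, Multiset.card_map]
    have : Multiset.card T.attach.val = T.card := Finset.card_attach
    omega
  have hBcard : Multiset.card B = k := by
    rw [hB, Multiset.card_add, Multiset.card_replicate, Multiset.card_map]
    have : Multiset.card T'.attach.val = T'.card := Finset.card_attach
    omega
  refine sep u w hCB i A B hAcard hBcard ?_ ?_ ?_
  · intro a ha
    rcases Multiset.mem_add.mp ha with ha | ha
    · obtain ⟨j, _, rfl⟩ := Multiset.mem_map.mp ha
      exact hfxi j.1 j.2
    · rwa [Multiset.eq_of_mem_replicate ha]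
  · intro b hb
    rcases Multiset.mem_add.mp hb with hb | hb
    · obtain ⟨j, _, rfl⟩ := Multiset.mem_map.mp hb
      exact hfyi j.1 j.2
    · rwa [Multiset.eq_of_mem_replicate hb]
  · intro j hj
    have hjO : j ∈ O := Finset.mem_erase.mpr ⟨hj, Finset.mem_univ j⟩
    by_cases hjT : j ∈ T
    · exact Or.inl ⟨fx j hjT, Multiset.mem_add.mpr (Or.inl
        (Multiset.mem_map.mpr ⟨⟨j, hjT⟩, Multiset.mem_attach _ _, rfl⟩)), hfx0 j hjT⟩
    · have hjT' : j ∈ T' := Finset.mem_sdiff.mpr ⟨hjO, hjT⟩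
      exact Or.inr ⟨fy j hjT', Multiset.mem_add.mpr (Or.inl
        (Multiset.mem_map.mpr ⟨⟨j, hjT'⟩, Multiset.mem_attach _ _, rfl⟩)), hfy0 j hjT'⟩

end Dich

end CBAux

end CayleyBacharachAux

open CBAux

/-- **Cayley–Bacharach collinearity in a product of projective spaces.**
If `c ≥ 1` distinct points of `ℙ^p × ℙ^q` over ℂ satisfy the Cayley–Bacharach
condition with respect to bihomogeneous forms of bidegree `(k, k)` with `k ≥ 1` and
`c ≤ 2k + 1`, then the points lie on a line of `ℙ^p × ℙ^q`: either all the first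
components are pairwise proportional and the second components span a subspace of
`ℂ^{q+1}` of dimension at most 2, or symmetrically. -/
theorem cayley_bacharach_line_product
    (p q k c : ℕ) (hk : 1 ≤ k) (hc : 1 ≤ c)
    (u : Fin c → (Fin (p + 1) → ℂ)) (w : Fin c → (Fin (q + 1) → ℂ))
    (hu0 : ∀ i, u i ≠ 0) (hw0 : ∀ i, w i ≠ 0)
    (hdist : ∀ i j, i ≠ j →
      ¬ ((∃ a : ℂ, u j = a • u i) ∧ (∃ b : ℂ, w j = b • w i)))
    (hCB : ∀ F : MvPolynomial (Fin (p + 1) ⊕ Fin (q + 1)) ℂ, IsBihomogeneous F k k →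
      ∀ i : Fin c, (∀ j, j ≠ i → MvPolynomial.eval (Sum.elim (u j) (w j)) F = 0) →
        MvPolynomial.eval (Sum.elim (u i) (w i)) F = 0)
    (hck : c ≤ 2 * k + 1) :
    ((∀ i j, ∃ a : ℂ, u j = a • u i) ∧
      Module.finrank ℂ ↥(Submodule.span ℂ (Set.range w)) ≤ 2) ∨
    ((∀ i j, ∃ b : ℂ, w j = b • w i) ∧
      Module.finrank ℂ ↥(Submodule.span ℂ (Set.range u)) ≤ 2) := by
  classical
  set i₀ : Fin c := ⟨0, hc⟩ with hi₀
  rcases dichotomy hk u w hu0 hw0 hdist hCB hck i₀ with hbig | hbig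
  · -- many w's proportional to w i₀ : all w proportional, right disjunct
    have hallW : ∀ j, ∃ b : ℂ, w j = b • w i₀ := by
      by_contra hno
      push_neg at hno
      obtain ⟨m, hm⟩ := hno
      have hm' : ¬ ∃ b : ℂ, w m = b • w i₀ := fun ⟨b, hb⟩ => hm b hb
      set S := insert i₀ ((Finset.univ.erase i₀).filter
        (fun j => ∃ b : ℂ, w j = b • w i₀)) with hS
      have hSW : ∀ x ∈ S, ∃ b : ℂ, w x = b • w i₀ := by
        intro x hx
        rcases Finset.mem_insert.mp hx with rfl | hx
        · exact ⟨1, (one_smul _ _).symm⟩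
        · exact (Finset.mem_filter.mp hx).2
      have hScard : k + 2 ≤ S.card := by
        rw [hS, Finset.card_insert_of_notMem (fun h =>
          (Finset.mem_erase.mp (Finset.filter_subset _ _ h)).1 rfl)]
        omega
      rcases dichotomy hk u w hu0 hw0 hdist hCB hck m with hmw | hmu
      · set T := insert m ((Finset.univ.erase m).filter
          (fun j => ∃ b : ℂ, w j = b • w m)) with hT
        have hTW : ∀ x ∈ T, ∃ b : ℂ, w x = b • w m := by
          intro x hx
          rcases Finset.mem_insert.mp hx with rfl | hx
          · exact ⟨1, (one_smul _ _).symm⟩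
          · exact (Finset.mem_filter.mp hx).2
        have hTcard : k + 2 ≤ T.card := by
          rw [hT, Finset.card_insert_of_notMem (fun h =>
            (Finset.mem_erase.mp (Finset.filter_subset _ _ h)).1 rfl)]
          omega
        have hdisj : Disjoint S T := by
          rw [Finset.disjoint_left]
          intro x hxS hxT
          exact hm' (prop_trans (hSW x hxS) (prop_symm (hw0 x) (hTW x hxT)))
        have hcard := Finset.card_union_of_disjoint hdisj
        have hle := Finset.card_le_univ (S ∪ T)
        rw [Fintype.card_fin] at hle
        omega
      · set T := insert m ((Finset.univ.erase m).filter
          (fun j => ∃ a : ℂ, u j = a • u m)) with hT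
        have hTU : ∀ x ∈ T, ∃ a : ℂ, u x = a • u m := by
          intro x hx
          rcases Finset.mem_insert.mp hx with rfl | hx
          · exact ⟨1, (one_smul _ _).symm⟩
          · exact (Finset.mem_filter.mp hx).2
        have hTcard : k + 2 ≤ T.card := by
          rw [hT, Finset.card_insert_of_notMem (fun h =>
            (Finset.mem_erase.mp (Finset.filter_subset _ _ h)).1 rfl)]
          omega
        have hint : 1 < (S ∩ T).card := by
          have h1 := Finset.card_inter_add_card_union S T
          have hle := Finset.card_le_univ (S ∪ T)
          rw [Fintype.card_fin] at hle
          omega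
        obtain ⟨x, hx, y, hy, hxy⟩ := Finset.one_lt_card.mp hint
        obtain ⟨hxS, hxT⟩ := Finset.mem_inter.mp hx
        obtain ⟨hyS, hyT⟩ := Finset.mem_inter.mp hy
        refine hdist x y hxy ⟨?_, ?_⟩
        · exact prop_trans (prop_symm (hu0 x) (hTU x hxT)) (hTU y hyT)
        · exact prop_trans (prop_symm (hw0 x) (hSW x hxS)) (hSW y hyS)
    refine Or.inr ⟨fun i j => prop_trans (prop_symm (hw0 i) (hallW i)) (hallW j), ?_⟩
    have hupair : ∀ i j : Fin c, i ≠ j → ¬ ∃ a : ℂ, u j = a • u i := by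
      intro i j hij hu
      exact hdist i j hij ⟨hu, prop_trans (prop_symm (hw0 i) (hallW i)) (hallW j)⟩
    obtain ⟨b0, hb0⟩ := exists_nonzero_dot (hw0 i₀)
    have hb0all : ∀ j, dot b0 (w j) ≠ 0 := by
      intro j
      obtain ⟨b, hb⟩ := hallW j
      have hbne : b ≠ 0 := fun h => hw0 j (by rw [hb, h, zero_smul])
      rw [hb, dot_smul]
      exact mul_ne_zero hbne hb0
    have hcbu : CBU u Finset.univ k := by
      intro i _ A hA h1 h2
      obtain ⟨a0, ha0⟩ := exists_nonzero_dot (hu0 i)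
      refine sep u w hCB i (A + Multiset.replicate (k - Multiset.card A) a0)
        (Multiset.replicate k b0) ?_ (Multiset.card_replicate _ _) ?_ ?_ ?_
      · rw [Multiset.card_add, Multiset.card_replicate]; omega
      · intro a ha
        rcases Multiset.mem_add.mp ha with ha | ha
        · exact h1 a ha
        · rwa [Multiset.eq_of_mem_replicate ha]
      · intro b hb
        rw [Multiset.eq_of_mem_replicate hb]
        exact hb0all i
      · intro j hj
        obtain ⟨a, ha, ha0'⟩ := h2 j (Finset.mem_univ j) hj
        exact Or.inl ⟨a, Multiset.mem_add.mpr (Or.inl ha), ha0'⟩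
    have hfin := rank_le_two u hu0 hupair k Finset.univ
      (by rw [Finset.card_univ, Fintype.card_fin]; exact hck) hcbu
    rwa [Finset.coe_univ, Set.image_univ] at hfin
  · -- many u's proportional to u i₀ : all u proportional, left disjunct
    have hallU : ∀ j, ∃ a : ℂ, u j = a • u i₀ := by
      by_contra hno
      push_neg at hno
      obtain ⟨m, hm⟩ := hno
      have hm' : ¬ ∃ a : ℂ, u m = a • u i₀ := fun ⟨a, ha⟩ => hm a ha
      set S := insert i₀ ((Finset.univ.erase i₀).filter
        (fun j => ∃ a : ℂ, u j = a • u i₀)) with hS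
      have hSU : ∀ x ∈ S, ∃ a : ℂ, u x = a • u i₀ := by
        intro x hx
        rcases Finset.mem_insert.mp hx with rfl | hx
        · exact ⟨1, (one_smul _ _).symm⟩
        · exact (Finset.mem_filter.mp hx).2
      have hScard : k + 2 ≤ S.card := by
        rw [hS, Finset.card_insert_of_notMem (fun h =>
          (Finset.mem_erase.mp (Finset.filter_subset _ _ h)).1 rfl)]
        omega
      rcases dichotomy hk u w hu0 hw0 hdist hCB hck m with hmw | hmu
      · set T := insert m ((Finset.univ.erase m).filter
          (fun j => ∃ b : ℂ, w j = b • w m)) with hT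
        have hTW : ∀ x ∈ T, ∃ b : ℂ, w x = b • w m := by
          intro x hx
          rcases Finset.mem_insert.mp hx with rfl | hx
          · exact ⟨1, (one_smul _ _).symm⟩
          · exact (Finset.mem_filter.mp hx).2
        have hTcard : k + 2 ≤ T.card := by
          rw [hT, Finset.card_insert_of_notMem (fun h =>
            (Finset.mem_erase.mp (Finset.filter_subset _ _ h)).1 rfl)]
          omega
        have hint : 1 < (S ∩ T).card := by
          have h1 := Finset.card_inter_add_card_union S T
          have hle := Finset.card_le_univ (S ∪ T)
          rw [Fintype.card_fin] at hle
          omega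
        obtain ⟨x, hx, y, hy, hxy⟩ := Finset.one_lt_card.mp hint
        obtain ⟨hxS, hxT⟩ := Finset.mem_inter.mp hx
        obtain ⟨hyS, hyT⟩ := Finset.mem_inter.mp hy
        refine hdist x y hxy ⟨?_, ?_⟩
        · exact prop_trans (prop_symm (hu0 x) (hSU x hxS)) (hSU y hyS)
        · exact prop_trans (prop_symm (hw0 x) (hTW x hxT)) (hTW y hyT)
      · set T := insert m ((Finset.univ.erase m).filter
          (fun j => ∃ a : ℂ, u j = a • u m)) with hT
        have hTU : ∀ x ∈ T, ∃ a : ℂ, u x = a • u m := by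
          intro x hx
          rcases Finset.mem_insert.mp hx with rfl | hx
          · exact ⟨1, (one_smul _ _).symm⟩
          · exact (Finset.mem_filter.mp hx).2
        have hTcard : k + 2 ≤ T.card := by
          rw [hT, Finset.card_insert_of_notMem (fun h =>
            (Finset.mem_erase.mp (Finset.filter_subset _ _ h)).1 rfl)]
          omega
        have hdisj : Disjoint S T := by
          rw [Finset.disjoint_left]
          intro x hxS hxT
          exact hm' (prop_trans (hSU x hxS) (prop_symm (hu0 x) (hTU x hxT)))
        have hcard := Finset.card_union_of_disjoint hdisj
        have hle := Finset.card_le_univ (S ∪ T)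
        rw [Fintype.card_fin] at hle
        omega
    refine Or.inl ⟨fun i j => prop_trans (prop_symm (hu0 i) (hallU i)) (hallU j), ?_⟩
    have hwpair : ∀ i j : Fin c, i ≠ j → ¬ ∃ b : ℂ, w j = b • w i := by
      intro i j hij hw
      exact hdist i j hij ⟨prop_trans (prop_symm (hu0 i) (hallU i)) (hallU j), hw⟩
    obtain ⟨a0, ha0⟩ := exists_nonzero_dot (hu0 i₀)
    have ha0all : ∀ j, dot a0 (u j) ≠ 0 := by
      intro j
      obtain ⟨a, ha⟩ := hallU j
      have hane : a ≠ 0 := fun h => hu0 j (by rw [ha, h, zero_smul])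
      rw [ha, dot_smul]
      exact mul_ne_zero hane ha0
    have hcbu : CBU w Finset.univ k := by
      intro i _ B hB h1 h2
      obtain ⟨b0, hb0⟩ := exists_nonzero_dot (hw0 i)
      refine sep u w hCB i (Multiset.replicate k a0)
        (B + Multiset.replicate (k - Multiset.card B) b0)
        (Multiset.card_replicate _ _) ?_ ?_ ?_ ?_
      · rw [Multiset.card_add, Multiset.card_replicate]; omega
      · intro a ha
        rw [Multiset.eq_of_mem_replicate ha]
        exact ha0all i
      · intro b hb
        rcases Multiset.mem_add.mp hb with hb | hb
        · exact h1 b hb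
        · rwa [Multiset.eq_of_mem_replicate hb]
      · intro j hj
        obtain ⟨b, hb, hb0'⟩ := h2 j (Finset.mem_univ j) hj
        exact Or.inr ⟨b, Multiset.mem_add.mpr (Or.inl hb), hb0'⟩
    have hfin := rank_le_two w hw0 hwpair k Finset.univ
      (by rw [Finset.card_univ, Fintype.card_fin]; exact hck) hcbu
    rwa [Finset.coe_univ, Set.image_univ] at hfin
end
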